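/- Let A be a symmetric n×n matrix over ℤ/2, a and b row vectors of length n, α, β, γ ∈ ℤ/2, and M = [[A, aᵀ, bᵀ],[a, α, γ],[b, γ, β]]. Suppose rank(M) = rank of the (n+1)×(n+2) matrix [[A, aᵀ, bᵀ],[a, α, γ]] (i.e. the last row of M depends on the others), and b does not lie in the row space of A. Then a + b lies in the row space of A. -/

import Mathlib

open Matrix

/-- The symmetric bordered matrix `[[A, aᵀ],[a, α]]`. -/
def border {n : ℕ} (A : Matrix (Fin n) (Fin n) (ZMod 2)) (a : Fin n → ZMod 2)
    (α : ZMod 2) : Matrix (Fin n ⊕ Unit) (Fin n ⊕ Unit) (ZMod 2) :=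
  Matrix.fromBlocks A (Matrix.of fun i _ => a i) (Matrix.of fun _ j => a j)
    (Matrix.of fun _ _ => α)

/-- The symmetric double-bordered matrix `[[A, aᵀ, bᵀ],[a, α, γ],[b, γ, β]]`;
the index `Sum.inr false` corresponds to the row/column of `a` (position `n+1`),
and `Sum.inr true` to the row/column of `b` (position `n+2`). -/
def dborder {n : ℕ} (A : Matrix (Fin n) (Fin n) (ZMod 2)) (a b : Fin n → ZMod 2)
    (α β γ : ZMod 2) : Matrix (Fin n ⊕ Bool) (Fin n ⊕ Bool) (ZMod 2) :=
  Matrix.of fun i j =>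
    match i, j with
    | Sum.inl i, Sum.inl j => A i j
    | Sum.inl i, Sum.inr false => a i
    | Sum.inl i, Sum.inr true => b i
    | Sum.inr false, Sum.inl j => a j
    | Sum.inr true, Sum.inl j => b j
    | Sum.inr false, Sum.inr false => α
    | Sum.inr true, Sum.inr true => β
    | Sum.inr false, Sum.inr true => γ
    | Sum.inr true, Sum.inr false => γ

/-- The row space of a matrix: the span of its rows. -/
def rowSpace {m n : Type*} (M : Matrix m n (ZMod 2)) : Submodule (ZMod 2) (n → ZMod 2) :=
  Submodule.span (ZMod 2) (Set.range fun i => M i)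

/-- The `(n+1)×(n+2)` matrix consisting of the first `n+1` rows of the
double-bordered matrix (the rows of `A` followed by the row of `a`). -/
def dborderTop {n : ℕ} (A : Matrix (Fin n) (Fin n) (ZMod 2)) (a b : Fin n → ZMod 2)
    (α β γ : ZMod 2) : Matrix (Fin n ⊕ Unit) (Fin n ⊕ Bool) (ZMod 2) :=
  Matrix.of fun i =>
    match i with
    | Sum.inl i => dborder A a b α β γ (Sum.inl i)
    | Sum.inr _ => dborder A a b α β γ (Sum.inr false)

theorem stmt6 {n : ℕ} (A : Matrix (Fin n) (Fin n) (ZMod 2)) (hA : A.IsSymm)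
    (a b : Fin n → ZMod 2) (α β γ : ZMod 2)
    (hrank : (dborder A a b α β γ).rank = (dborderTop A a b α β γ).rank)
    (hb : b ∉ rowSpace A) :
    a + b ∈ rowSpace A := by
  set M := dborder A a b α β γ with hM
  set T := dborderTop A a b α β γ with hT
  have hle : rowSpace T ≤ rowSpace M := by
    rw [rowSpace, Submodule.span_le]
    rintro _ ⟨i, rfl⟩
    rcases i with i | u
    · exact Submodule.subset_span ⟨Sum.inl i, rfl⟩
    · exact Submodule.subset_span ⟨Sum.inr false, rfl⟩
  have heq : rowSpace T = rowSpace M :=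
    Submodule.eq_of_le_of_finrank_eq hle (by
      rw [rowSpace, rowSpace]
      exact (Matrix.rank_eq_finrank_span_row T).symm.trans
        (hrank.symm.trans (Matrix.rank_eq_finrank_span_row M)))
  have hbrow : M (Sum.inr true) ∈ rowSpace T := by
    rw [heq]; exact Submodule.subset_span ⟨Sum.inr true, rfl⟩
  -- project to the first n coordinates
  let π : ((Fin n ⊕ Bool) → ZMod 2) →ₗ[ZMod 2] (Fin n → ZMod 2) :=
    LinearMap.funLeft (ZMod 2) (ZMod 2) Sum.inl
  have hπ : π (M (Sum.inr true)) ∈ Submodule.map π (rowSpace T) :=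
    Submodule.mem_map_of_mem hbrow
  have hπb : π (M (Sum.inr true)) = b := by
    funext i; rfl
  have himg : Submodule.map π (rowSpace T) ≤
      Submodule.span (ZMod 2) (insert a (Set.range fun i => A i)) := by
    rw [rowSpace, Submodule.map_span, Submodule.span_le]
    rintro _ ⟨_, ⟨i, rfl⟩, rfl⟩
    rcases i with i | u
    · exact Submodule.subset_span (Or.inr ⟨i, by funext j; rfl⟩)
    · exact Submodule.subset_span (Or.inl (by funext j; rfl))
  have hbmem : b ∈ Submodule.span (ZMod 2) (insert a (Set.range fun i => A i)) := by
    rw [← hπb]; exact himg hπ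
  rw [Submodule.mem_span_insert] at hbmem
  obtain ⟨c, z, hz, hbz⟩ := hbmem
  have hz' : z ∈ rowSpace A := hz
  rcases (by decide : ∀ c : ZMod 2, c = 0 ∨ c = 1) c with h0 | h1
  · exact absurd (by rw [hbz, h0, zero_smul, zero_add]; exact hz') hb
  · have : a + b = z := by
      rw [hbz, h1, one_smul]
      abel_nf
      rw [show (2 : ℤ) • a = 0 from by
        funext i; simp [two_smul]
        ring_nf
        simp [show (2 : ZMod 2) = 0 from rfl]]
      simp
    rw [this]; exact hz'
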